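/- Let m and n be odd integers greater than 1, and let N be an integer with N ≥ 2mn. Then in the symmetric group of permutations of Fin N, q_{ι_n}(ι_{mn}) = m: the permutation ι_{mn} is a product of m permutations each conjugate to ι_n, and ι_{mn} is not a product of fewer than m elements each conjugate to ι_n or to ι_n⁻¹. -/

import Mathlib

/-- `iotaFin n k` is the permutation `(1,2)(3,4)⋯(2k−1,2k)` of `Fin n`. -/
def iotaFin (n k : ℕ) : Equiv.Perm (Fin n) :=
  ((List.range k).map fun i =>
    if h : 2 * i + 1 < n then
      Equiv.swap (⟨2 * i, by omega⟩ : Fin n) ⟨2 * i + 1, h⟩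
    else 1).prod

/-- `qnorm x g` is the least number `n` such that `g` is a product of `n` elements,
each conjugate to `x` or to `x⁻¹`. -/
noncomputable def qnorm {G : Type*} [Group G] (x g : G) : ℕ :=
  sInf {n | ∃ L : List G, L.length = n ∧ (∀ y ∈ L, IsConj x y ∨ IsConj x⁻¹ y) ∧ L.prod = g}

private def tauN (N i : ℕ) : Equiv.Perm (Fin N) :=
  if h : 2 * i + 1 < N then
    Equiv.swap (⟨2 * i, by omega⟩ : Fin N) ⟨2 * i + 1, h⟩
  else 1

private lemma iotaFin_eq (N k : ℕ) : iotaFin N k = ((List.range k).map (tauN N)).prod := rfl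

private lemma iotaFin_succ (N k : ℕ) : iotaFin N (k + 1) = iotaFin N k * tauN N k := by
  rw [iotaFin_eq, iotaFin_eq, List.range_succ, List.map_append, List.prod_append]
  simp

private lemma iotaFin_add (N a b : ℕ) :
    iotaFin N (a + b) = iotaFin N a * ((List.range b).map fun i => tauN N (a + i)).prod := by
  rw [iotaFin_eq, iotaFin_eq, List.range_add, List.map_append, List.prod_append, List.map_map]
  rfl

private lemma tauN_apply_ne (N i : ℕ) (x : Fin N) (h1 : x.val ≠ 2 * i) (h2 : x.val ≠ 2 * i + 1) :
    tauN N i x = x := by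
  unfold tauN
  split
  · apply Equiv.swap_apply_of_ne_of_ne
    · intro h; apply h1; rw [h]
    · intro h; apply h2; rw [h]
  · rfl

private lemma iotaFin_apply_of_ge (N k : ℕ) (x : Fin N) (hx : 2 * k ≤ x.val) :
    iotaFin N k x = x := by
  induction k with
  | zero => rw [iotaFin_eq]; simp
  | succ k ih =>
    rw [iotaFin_succ, Equiv.Perm.mul_apply,
      tauN_apply_ne N k x (by omega) (by omega), ih (by omega)]

private lemma iotaFin_apply_pair (N k i : ℕ) (hi : i < k) (h : 2 * i + 1 < N) :
    iotaFin N k ⟨2 * i, by omega⟩ = ⟨2 * i + 1, h⟩ ∧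
    iotaFin N k ⟨2 * i + 1, h⟩ = ⟨2 * i, by omega⟩ := by
  induction k with
  | zero => omega
  | succ k ih =>
    rw [iotaFin_succ]
    rcases Nat.lt_or_ge i k with hik | hik
    · obtain ⟨h1, h2⟩ := ih hik
      constructor
      · rw [Equiv.Perm.mul_apply, tauN_apply_ne N k _ (by simp only [Fin.val_mk]; omega) (by simp only [Fin.val_mk]; omega), h1]
      · rw [Equiv.Perm.mul_apply, tauN_apply_ne N k _ (by simp only [Fin.val_mk]; omega) (by simp only [Fin.val_mk]; omega), h2]
    · have hik' : i = k := by omega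
      subst hik'
      have ht1 : tauN N i ⟨2 * i, by omega⟩ = ⟨2 * i + 1, h⟩ := by
        unfold tauN; rw [dif_pos h]; exact Equiv.swap_apply_left _ _
      have ht2 : tauN N i ⟨2 * i + 1, h⟩ = ⟨2 * i, by omega⟩ := by
        unfold tauN; rw [dif_pos h]; exact Equiv.swap_apply_right _ _
      constructor
      · rw [Equiv.Perm.mul_apply, ht1, iotaFin_apply_of_ge N i _ (by simp)]
      · rw [Equiv.Perm.mul_apply, ht2, iotaFin_apply_of_ge N i _ (by simp)]

private lemma support_iotaFin (N k : ℕ) (hk : 2 * k ≤ N) :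
    (iotaFin N k).support = Finset.univ.filter fun x : Fin N => x.val < 2 * k := by
  ext x
  simp only [Equiv.Perm.mem_support, Finset.mem_filter, Finset.mem_univ, true_and]
  constructor
  · intro hx
    by_contra hx2
    exact hx (iotaFin_apply_of_ge N k x (by omega))
  · intro hx
    rcases Nat.even_or_odd x.val with ⟨i, hi⟩ | ⟨i, hi⟩
    · have hik : i < k := by omega
      have h1 : 2 * i + 1 < N := by omega
      have hx' : x = ⟨2 * i, by omega⟩ := Fin.ext (by simp only [Fin.val_mk]; omega)
      rw [hx', (iotaFin_apply_pair N k i hik h1).1]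
      simp [Fin.ext_iff]
    · have hik : i < k := by omega
      have h1 : 2 * i + 1 < N := by omega
      have hx' : x = ⟨2 * i + 1, h1⟩ := Fin.ext (by simp only [Fin.val_mk]; omega)
      rw [hx', (iotaFin_apply_pair N k i hik h1).2]
      simp [Fin.ext_iff]

private lemma card_filter_lt (N k : ℕ) (h : k ≤ N) :
    (Finset.univ.filter fun x : Fin N => x.val < k).card = k := by
  have heq : (Finset.univ.filter fun x : Fin N => x.val < k) =
      Finset.univ.map (Fin.castLEEmb h) := by
    ext x
    simp only [Finset.mem_filter, Finset.mem_univ, true_and, Finset.mem_map,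
      Fin.castLEEmb, Function.Embedding.coeFn_mk]
    constructor
    · intro hx; exact ⟨⟨x.val, hx⟩, Fin.ext rfl⟩
    · rintro ⟨a, _, rfl⟩; exact a.2.trans_le (le_refl _) |>.trans_le (le_refl _) |>.trans_le (le_refl _)
  rw [heq, Finset.card_map, Finset.card_univ, Fintype.card_fin]

private lemma card_support_iotaFin (N k : ℕ) (hk : 2 * k ≤ N) :
    (iotaFin N k).support.card = 2 * k := by
  rw [support_iotaFin N k hk, card_filter_lt N (2 * k) hk]

private lemma card_support_prod_le {N : ℕ} (c : ℕ) (L : List (Equiv.Perm (Fin N)))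
    (h : ∀ y ∈ L, y.support.card ≤ c) : L.prod.support.card ≤ c * L.length := by
  induction L with
  | nil => simp
  | cons hd tl ih =>
    rw [List.prod_cons]
    calc (hd * tl.prod).support.card ≤ (hd.support ∪ tl.prod.support).card :=
          Finset.card_le_card (Equiv.Perm.support_mul_le hd tl.prod)
      _ ≤ hd.support.card + tl.prod.support.card := Finset.card_union_le _ _
      _ ≤ c + c * tl.length := by
          exact Nat.add_le_add (h hd List.mem_cons_self)
            (ih fun y hy => h y (List.mem_cons_of_mem _ hy))
      _ = c * (hd :: tl).length := by simp [Nat.mul_succ, List.length_cons]; ring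

/-- Lemma 8.4(2): for odd `m, n > 1` and `N ≥ 2mn`, one has `q_{ι_n}(ι_{mn}) = m` in the
symmetric group of `Fin N`; in particular `ι_{mn}` is a product of `m` conjugates of `ι_n`. -/
theorem qnorm_iota_iota_mul_eq (m n N : ℕ)
    (hm : Odd m) (hm1 : 1 < m) (hn : Odd n) (hn1 : 1 < n) (hN : 2 * (m * n) ≤ N) :
    qnorm (iotaFin N n) (iotaFin N (m * n)) = m ∧
    ∃ L : List (Equiv.Perm (Fin N)), L.length = m ∧
      (∀ σ ∈ L, IsConj (iotaFin N n) σ) ∧ L.prod = iotaFin N (m * n) := by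
  have hmn : 4 ≤ m * n := by nlinarith
  haveI : NeZero N := ⟨by omega⟩
  have hnm : n ≤ m * n := Nat.le_mul_of_pos_left n (by omega)
  -- block construction
  have hblock : ∀ j < m, ∃ b : Equiv.Perm (Fin N), IsConj (iotaFin N n) b ∧
      iotaFin N (j * n) * b = iotaFin N ((j + 1) * n) := by
    intro j hj
    have hjn : (j + 1) * n ≤ m * n := Nat.mul_le_mul_right n (by omega)
    have hjn' : j * n + n ≤ m * n := by rw [← Nat.succ_mul]; exact hjn
    have hc : 2 * (j * n) < N := by omega
    set c : Fin N := ⟨2 * (j * n), hc⟩ with hcdef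
    set σ : Equiv.Perm (Fin N) := Equiv.addRight c with hσ
    refine ⟨σ * iotaFin N n * σ⁻¹, ?_, ?_⟩
    · exact isConj_iff.mpr ⟨σ, rfl⟩
    · have hconj : σ * iotaFin N n * σ⁻¹ =
          ((List.range n).map fun i => tauN N (j * n + i)).prod := by
        have : σ * iotaFin N n * σ⁻¹ = MulAut.conj σ (iotaFin N n) := rfl
        rw [this, iotaFin_eq, map_list_prod, List.map_map]
        congr 1
        apply List.map_congr_left
        intro i hi
        rw [List.mem_range] at hi
        have h1 : 2 * i + 1 < N := by omega
        have h2 : 2 * (j * n + i) + 1 < N := by omega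
        show MulAut.conj σ (tauN N i) = tauN N (j * n + i)
        unfold tauN
        rw [dif_pos h1, dif_pos h2, MulAut.conj_apply, ← Equiv.swap_apply_apply]
        congr 1
        · apply Fin.ext
          show ((⟨2 * i, by omega⟩ : Fin N) + c).val = 2 * (j * n + i)
          rw [Fin.val_add]
          simp only [hcdef]
          rw [Nat.mod_eq_of_lt (by omega)]
          ring
        · apply Fin.ext
          show ((⟨2 * i + 1, h1⟩ : Fin N) + c).val = 2 * (j * n + i) + 1
          rw [Fin.val_add]
          simp only [hcdef]
          rw [Nat.mod_eq_of_lt (by omega)]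
          ring
      rw [hconj, Nat.succ_mul, iotaFin_add]
  -- upper bound: existence of list of length m
  have hexists : ∀ j ≤ m, ∃ L : List (Equiv.Perm (Fin N)), L.length = j ∧
      (∀ σ ∈ L, IsConj (iotaFin N n) σ) ∧ L.prod = iotaFin N (j * n) := by
    intro j hj
    induction j with
    | zero => exact ⟨[], rfl, by simp, by simp [iotaFin_eq]⟩
    | succ j ih =>
      obtain ⟨L, hL1, hL2, hL3⟩ := ih (by omega)
      obtain ⟨b, hb1, hb2⟩ := hblock j (by omega)
      refine ⟨L ++ [b], by simp [hL1], ?_, ?_⟩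
      · intro σ hσ
        rcases List.mem_append.mp hσ with h | h
        · exact hL2 σ h
        · rw [List.mem_singleton.mp h]; exact hb1
      · rw [List.prod_append, List.prod_singleton, hL3, hb2]
  obtain ⟨L, hL1, hL2, hL3⟩ := hexists m le_rfl
  -- lower bound
  have hlow : ∀ k ∈ {n' | ∃ L : List (Equiv.Perm (Fin N)), L.length = n' ∧
      (∀ y ∈ L, IsConj (iotaFin N n) y ∨ IsConj (iotaFin N n)⁻¹ y) ∧
      L.prod = iotaFin N (m * n)}, m ≤ k := by
    rintro k ⟨L', hL'1, hL'2, hL'3⟩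
    have hsupp : ∀ y ∈ L', y.support.card ≤ 2 * n := by
      intro y hy
      have : y.support.card = (iotaFin N n).support.card := by
        rcases hL'2 y hy with h | h
        · obtain ⟨c, hc⟩ := isConj_iff.mp h
          rw [← hc, Equiv.Perm.card_support_conj]
        · obtain ⟨c, hc⟩ := isConj_iff.mp h
          rw [← hc, Equiv.Perm.card_support_conj, Equiv.Perm.support_inv]
      rw [this, card_support_iotaFin N n (by omega)]
    have hprod : L'.prod.support.card ≤ 2 * n * k := by
      rw [← hL'1]; exact card_support_prod_le (2 * n) L' hsupp
    rw [hL'3, card_support_iotaFin N (m * n) hN] at hprod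
    have : 2 * (m * n) = 2 * n * m := by ring
    rw [this] at hprod
    exact Nat.le_of_mul_le_mul_left hprod (by omega)
  have hmem : m ∈ {n' | ∃ L : List (Equiv.Perm (Fin N)), L.length = n' ∧
      (∀ y ∈ L, IsConj (iotaFin N n) y ∨ IsConj (iotaFin N n)⁻¹ y) ∧
      L.prod = iotaFin N (m * n)} :=
    ⟨L, hL1, fun y hy => Or.inl (hL2 y hy), hL3⟩
  refine ⟨?_, L, hL1, hL2, hL3⟩
  unfold qnorm
  exact le_antisymm (Nat.sInf_le hmem) (hlow _ (Nat.sInf_mem ⟨m, hmem⟩))
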